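/- Let C be a monoidal category. Suppose h₁, h₂ : A₁ ⇉ A₂ is a reflexive pair with coequalizer h : A₂ → A₃ and k₁, k₂ : B₁ ⇉ B₂ is a reflexive pair with coequalizer k : B₂ → B₃, both preserved by tensoring with any object on either side. Then the square with vertices A₂ ⊗ B₂, A₃ ⊗ B₂, A₂ ⊗ B₃, A₃ ⊗ B₃, and edges h ⊗ B₂, A₂ ⊗ k, A₃ ⊗ k, h ⊗ B₃, is a pushout; that is, A₃ ⊗ B₃ is the cointersection of the quotients A₃ ⊗ B₂ and A₂ ⊗ B₃ of A₂ ⊗ B₂. -/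
import Mathlib

open CategoryTheory CategoryTheory.Limits CategoryTheory.MonoidalCategory

universe v u

/-- (Part of the 3-by-3 lemma.) Given two reflexive coequalizers in a monoidal category,
both preserved by tensoring with any object on either side, `A₃ ⊗ B₃` is the
cointersection (pushout) of the quotients `A₃ ⊗ B₂` and `A₂ ⊗ B₃` of `A₂ ⊗ B₂`. -/
theorem tensor_cointersection_of_reflexive_coequalizers
    {C : Type u} [Category.{v} C] [MonoidalCategory C]
    {A₁ A₂ A₃ B₁ B₂ B₃ : C}
    (h₁ h₂ : A₁ ⟶ A₂) (hrefl : IsReflexivePair h₁ h₂)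
    (k₁ k₂ : B₁ ⟶ B₂) (krefl : IsReflexivePair k₁ k₂)
    (h : A₂ ⟶ A₃) (wh : h₁ ≫ h = h₂ ≫ h) (hcoeq : IsColimit (Cofork.ofπ h wh))
    (k : B₂ ⟶ B₃) (wk : k₁ ≫ k = k₂ ≫ k) (kcoeq : IsColimit (Cofork.ofπ k wk))
    (hpres : ∀ X : C, PreservesColimit (parallelPair h₁ h₂) (tensorLeft X) ∧
      PreservesColimit (parallelPair h₁ h₂) (tensorRight X))
    (kpres : ∀ X : C, PreservesColimit (parallelPair k₁ k₂) (tensorLeft X) ∧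
      PreservesColimit (parallelPair k₁ k₂) (tensorRight X)) :
    IsPushout (h ▷ B₂) (A₂ ◁ k) (A₃ ◁ k) (h ▷ B₃) := by
  -- `A₃ ◁ k` is the coequalizer of `A₃ ◁ k₁` and `A₃ ◁ k₂`
  have kA₃ : IsColimit (Cofork.ofπ (A₃ ◁ k)
      (by simp only [← MonoidalCategory.whiskerLeft_comp, wk]) :
        Cofork (A₃ ◁ k₁) (A₃ ◁ k₂)) := by
    haveI := (kpres A₃).1
    exact isColimitCoforkMapOfIsColimit (tensorLeft A₃) wk kcoeq
  -- `A₂ ◁ k` is the coequalizer of `A₂ ◁ k₁` and `A₂ ◁ k₂`, hence epi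
  have kA₂ : IsColimit (Cofork.ofπ (A₂ ◁ k)
      (by simp only [← MonoidalCategory.whiskerLeft_comp, wk]) :
        Cofork (A₂ ◁ k₁) (A₂ ◁ k₂)) := by
    haveI := (kpres A₂).1
    exact isColimitCoforkMapOfIsColimit (tensorLeft A₂) wk kcoeq
  -- `h ▷ B₁` is the coequalizer of `h₁ ▷ B₁` and `h₂ ▷ B₁`, hence epi
  have hB₁ : IsColimit (Cofork.ofπ (h ▷ B₁)
      (by simp only [← MonoidalCategory.comp_whiskerRight, wh]) :
        Cofork (h₁ ▷ B₁) (h₂ ▷ B₁)) := by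
    haveI := (hpres B₁).2
    exact isColimitCoforkMapOfIsColimit (tensorRight B₁) wh hcoeq
  have epi_kA₂ : Epi (A₂ ◁ k) := epi_of_isColimit_cofork kA₂
  have epi_hB₁ : Epi (h ▷ B₁) := epi_of_isColimit_cofork hB₁
  have sq : h ▷ B₂ ≫ A₃ ◁ k = A₂ ◁ k ≫ h ▷ B₃ := (whisker_exchange h k).symm
  have coeq : ∀ s : PushoutCocone (h ▷ B₂) (A₂ ◁ k),
      A₃ ◁ k₁ ≫ s.inl = A₃ ◁ k₂ ≫ s.inl := by
    intro s
    rw [← cancel_epi (h ▷ B₁)]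
    have e₁ : h ▷ B₁ ≫ A₃ ◁ k₁ = A₂ ◁ k₁ ≫ h ▷ B₂ := (whisker_exchange h k₁).symm
    have e₂ : h ▷ B₁ ≫ A₃ ◁ k₂ = A₂ ◁ k₂ ≫ h ▷ B₂ := (whisker_exchange h k₂).symm
    rw [← Category.assoc, ← Category.assoc, e₁, e₂, Category.assoc, Category.assoc,
      s.condition, ← Category.assoc, ← Category.assoc,
      ← MonoidalCategory.whiskerLeft_comp, ← MonoidalCategory.whiskerLeft_comp, wk]
  have fac : ∀ s : PushoutCocone (h ▷ B₂) (A₂ ◁ k),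
      A₃ ◁ k ≫ Cofork.IsColimit.desc kA₃ s.inl (coeq s) = s.inl := fun s => by
    simpa using Cofork.IsColimit.π_desc' kA₃ s.inl (coeq s)
  refine IsPushout.of_isColimit (c := PushoutCocone.mk (A₃ ◁ k) (h ▷ B₃) sq) ?_
  refine PushoutCocone.IsColimit.mk sq
    (fun s => Cofork.IsColimit.desc kA₃ s.inl (coeq s))
    (fun s => ?_) (fun s => ?_) (fun s m hl hr => ?_)
  · -- fac_left
    exact fac s
  · -- fac_right: h ▷ B₃ ≫ desc = s.inr; use that A₂ ◁ k is epi
    rw [← cancel_epi (A₂ ◁ k), ← Category.assoc, ← sq, Category.assoc, fac s]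
    exact s.condition
  · -- uniqueness: A₃ ◁ k is epi
    have epi_kA₃ : Epi (A₃ ◁ k) := epi_of_isColimit_cofork kA₃
    rw [← cancel_epi (A₃ ◁ k), hl, fac s]
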